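/- Derivative formula for RORAC under exposure change: with U(h) = Σ_i h_i μ_i and f(h) as in the standard-formula aggregation (f(h⁰) > 0 at h⁰ = (1,…,1)), the function t ↦ U(h⁰ + t e_i)/f(h⁰ + t e_i) is differentiable at t = 0 with derivative (μ_i − RORAC·A_i)/f(h⁰), where RORAC = U(h⁰)/f(h⁰) and A_i = v_i·(Σ_w ρ_{i,w} v_w)/f(h⁰) is the Euler contribution. -/

import Mathlib

open Finset

/-- Derivative formula for the overall RORAC under a small exposure change in
sub-portfolio `i`: `d/dt [U/f](h⁰ + t e_i)` at `t = 0` equals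
`(μ i − RORAC * A i) / f h⁰`. -/
theorem stmt_17 (n : ℕ) (μ v : Fin n → ℝ) (ρ : Fin n → Fin n → ℝ)
    (hsym : ∀ i j, ρ i j = ρ j i)
    (hpsd : ∀ z : Fin n → ℝ, 0 ≤ ∑ i, ∑ j, ρ i j * z i * z j)
    (U : (Fin n → ℝ) → ℝ) (hU : ∀ h, U h = ∑ i, h i * μ i)
    (f : (Fin n → ℝ) → ℝ)
    (hf : ∀ h, f h = Real.sqrt (∑ i, ∑ j, ρ i j * (h i * v i) * (h j * v j)))
    (h0 : Fin n → ℝ) (hh0 : h0 = fun _ => 1) (hfh0 : 0 < f h0)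
    (i : Fin n)
    (RORAC : ℝ) (hR : RORAC = U h0 / f h0)
    (A : ℝ) (hA : A = v i * (∑ w, ρ i w * v w) / f h0) :
    HasDerivAt
      (fun t : ℝ => U (h0 + t • (Pi.single i 1 : Fin n → ℝ)) / f (h0 + t • (Pi.single i 1 : Fin n → ℝ)))
      ((μ i - RORAC * A) / f h0) 0 := by
  set S : ℝ := ∑ j, ∑ k, ρ j k * v j * v k with hS
  set B : ℝ := v i * ∑ w, ρ i w * v w with hB
  set C : ℝ := ρ i i * v i * v i with hC
  have hfh0' : f h0 = Real.sqrt S := by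
    rw [hf, hh0]; simp [hS]
  have hSpos : 0 < S := Real.sqrt_pos.mp (hfh0' ▸ hfh0)
  have hsqS : Real.sqrt S * Real.sqrt S = S := Real.mul_self_sqrt hSpos.le
  have hsqSpos : 0 < Real.sqrt S := Real.sqrt_pos.mpr hSpos
  -- numerator
  have hUeq : ∀ t : ℝ, U (h0 + t • (Pi.single i 1 : Fin n → ℝ)) = U h0 + t * μ i := by
    intro t
    rw [hU, hU, hh0]
    simp [Pi.single_apply, add_mul, ite_mul, Finset.sum_add_distrib, Finset.sum_ite_eq']
  -- denominator argument
  have key : ∀ t : ℝ, (∑ j, ∑ k, ρ j k * ((h0 + t • (Pi.single i 1 : Fin n → ℝ)) j * v j)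
      * ((h0 + t • (Pi.single i 1 : Fin n → ℝ)) k * v k)) = S + 2 * B * t + C * t ^ 2 := by
    intro t
    subst hh0
    have expand : ∀ j k : Fin n,
        ρ j k * ((((fun _ => (1:ℝ)) : Fin n → ℝ) + t • (Pi.single i 1 : Fin n → ℝ)) j * v j)
          * ((((fun _ => (1:ℝ)) : Fin n → ℝ) + t • (Pi.single i 1 : Fin n → ℝ)) k * v k)
        = ρ j k * v j * v k
          + (if k = i then ρ j k * v j * v k * t else 0)
          + ((if j = i then ρ j k * v j * v k * t else 0)
          + (if j = i then (if k = i then ρ j k * v j * v k * (t * t) else 0) else 0)) := by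
      intro j k
      simp only [Pi.add_apply, Pi.smul_apply, Pi.single_apply, smul_eq_mul]
      split_ifs <;> ring
    rw [Finset.sum_congr rfl fun j _ => Finset.sum_congr rfl fun k _ => expand j k]
    simp only [Finset.sum_add_distrib]
    have pull : ∀ F : Fin n → Fin n → ℝ,
        (∑ x : Fin n, ∑ y : Fin n, if x = i then F x y else 0) = ∑ y, F i y := by
      intro F
      rw [Finset.sum_comm]
      simp [Finset.sum_ite_eq']
    rw [pull fun x y => ρ x y * v x * v y * t,
        pull fun x y => if y = i then ρ x y * v x * v y * (t * t) else 0]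
    simp only [Finset.sum_ite_eq', Finset.mem_univ, if_true]
    have e1 : (∑ x : Fin n, ρ x i * v x * v i * t) = B * t := by
      rw [hB, Finset.mul_sum, Finset.sum_mul]
      exact Finset.sum_congr rfl fun j _ => by rw [hsym j i]; ring
    have e2 : (∑ y : Fin n, ρ i y * v i * v y * t) = B * t := by
      rw [hB, Finset.mul_sum, Finset.sum_mul]
      exact Finset.sum_congr rfl fun j _ => by ring
    rw [e1, e2, show ρ i i * v i * v i * (t * t) = C * t ^ 2 from by rw [hC]; ring]
    ring
  have hDen : ∀ t : ℝ, f (h0 + t • (Pi.single i 1 : Fin n → ℝ))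
      = Real.sqrt (S + 2 * B * t + C * t ^ 2) := by
    intro t; rw [hf, key t]
  -- derivative of quadratic
  have hq : HasDerivAt (fun t : ℝ => S + 2 * B * t + C * t ^ 2) (2 * B) 0 := by
    have h1 : HasDerivAt (fun t : ℝ => S + 2 * B * t + C * t ^ 2)
        (0 + 2 * B * 1 + C * (2 * 0 ^ 1)) 0 :=
      ((hasDerivAt_const (0:ℝ) S).add (((hasDerivAt_id (0:ℝ)).const_mul (2*B)))).add
        (((hasDerivAt_pow 2 (0:ℝ))).const_mul C)
    simpa using h1
  have hq0 : S + 2 * B * (0:ℝ) + C * (0:ℝ) ^ 2 = S := by norm_num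
  have hsq : HasDerivAt (fun t : ℝ => Real.sqrt (S + 2 * B * t + C * t ^ 2))
      (2 * B / (2 * Real.sqrt S)) 0 := by
    have := hq.sqrt (x := 0) (by simpa [hq0] using hSpos.ne')
    simpa [hq0] using this
  have hnum : HasDerivAt (fun t : ℝ => U h0 + t * μ i) (μ i) 0 := by
    simpa using ((hasDerivAt_id (0:ℝ)).mul_const (μ i)).const_add (U h0)
  have hdiv := hnum.div hsq (by
    simp only [hq0]
    exact ne_of_gt hsqSpos)
  have hfun : (fun t : ℝ => U (h0 + t • (Pi.single i 1 : Fin n → ℝ))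
        / f (h0 + t • (Pi.single i 1 : Fin n → ℝ)))
      = fun t : ℝ => (U h0 + t * μ i) / Real.sqrt (S + 2 * B * t + C * t ^ 2) := by
    funext t; rw [hUeq, hDen]
  rw [hfun]
  refine hdiv.congr_deriv (Eq.symm ?_)
  rw [hR, hA, hfh0', hq0]
  have h3 : Real.sqrt S ^ 3 = S * Real.sqrt S := by
    rw [pow_succ, Real.sq_sqrt hSpos.le]
  field_simp
  ring_nf
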